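/- Define φ : ℝ → ℝ by φ(t) = log(e^{−t/2} + e^{t/2}). Then φ is infinitely differentiable, its second derivative satisfies φ''(t) > 0 for all t ∈ ℝ, and |φ'''(t)| ≤ φ''(t) for all t ∈ ℝ; that is, the logistic loss φ is (1,2)-self-concordant. -/

import Mathlib

noncomputable section StmtAux

private def g (t : ℝ) : ℝ := Real.exp (-t / 2) + Real.exp (t / 2)

private def h (t : ℝ) : ℝ := ((Real.exp (t / 2) - Real.exp (-t / 2)) / 2) / g t

private lemma gpos (t : ℝ) : 0 < g t := by
  unfold g; positivity

private lemma hasDerivAt_g (t : ℝ) :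
    HasDerivAt g ((Real.exp (t / 2) - Real.exp (-t / 2)) / 2) t := by
  have h1 : HasDerivAt (fun t : ℝ => Real.exp (-t / 2)) (Real.exp (-t / 2) * (-1 / 2)) t := by
    have := ((hasDerivAt_id t).neg.div_const 2).exp
    simpa [neg_div] using this
  have h2 : HasDerivAt (fun t : ℝ => Real.exp (t / 2)) (Real.exp (t / 2) * (1 / 2)) t := by
    have := ((hasDerivAt_id t).div_const 2).exp
    simpa using this
  have := h1.add h2
  refine this.congr_deriv ?_
  ring

private lemma hasDerivAt_phi (t : ℝ) :
    HasDerivAt (fun t : ℝ => Real.log (Real.exp (-t / 2) + Real.exp (t / 2))) (h t) t :=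
  (hasDerivAt_g t).log (gpos t).ne'

private lemma hasDerivAt_g' (t : ℝ) :
    HasDerivAt (fun t => (Real.exp (t / 2) - Real.exp (-t / 2)) / 2) (g t / 4) t := by
  have h1 : HasDerivAt (fun t : ℝ => Real.exp (-t / 2)) (Real.exp (-t / 2) * (-1 / 2)) t := by
    have := ((hasDerivAt_id t).neg.div_const 2).exp
    simpa [neg_div] using this
  have h2 : HasDerivAt (fun t : ℝ => Real.exp (t / 2)) (Real.exp (t / 2) * (1 / 2)) t := by
    have := ((hasDerivAt_id t).div_const 2).exp
    simpa using this
  have := (h2.sub h1).div_const 2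
  refine this.congr_deriv ?_
  unfold g; ring

private lemma hasDerivAt_h (t : ℝ) : HasDerivAt h (1 / 4 - h t ^ 2) t := by
  have hgne := (gpos t).ne'
  have := (hasDerivAt_g' t).div (hasDerivAt_g t) hgne
  refine this.congr_deriv ?_
  unfold h
  field_simp

private lemma hasDerivAt_phi'' (t : ℝ) :
    HasDerivAt (fun t => 1 / 4 - h t ^ 2) (-(2 * h t) * (1 / 4 - h t ^ 2)) t := by
  have := ((hasDerivAt_h t).pow 2).const_sub (1 / 4)
  refine this.congr_deriv ?_
  ring

private lemma habs (t : ℝ) : |h t| < 1 / 2 := by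
  have hg := gpos t
  have ha := Real.exp_pos (t / 2)
  have hb := Real.exp_pos (-t / 2)
  rw [abs_lt]
  unfold h g at *
  constructor
  · rw [lt_div_iff₀ hg]; nlinarith
  · rw [div_lt_iff₀ hg]; nlinarith

end StmtAux

/-- the logistic loss `φ(t) = log(e^{-t/2} + e^{t/2})` is infinitely
differentiable, has strictly positive second derivative, and satisfies `|φ'''| ≤ φ''`;
that is, it is `(1,2)`-self-concordant. -/
theorem stmt_18 :
    ContDiff ℝ (⊤ : ℕ∞) (fun t : ℝ => Real.log (Real.exp (-t / 2) + Real.exp (t / 2))) ∧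
    (∀ t : ℝ,
      0 < iteratedDeriv 2 (fun t : ℝ => Real.log (Real.exp (-t / 2) + Real.exp (t / 2))) t) ∧
    (∀ t : ℝ,
      |iteratedDeriv 3 (fun t : ℝ => Real.log (Real.exp (-t / 2) + Real.exp (t / 2))) t| ≤
        iteratedDeriv 2 (fun t : ℝ => Real.log (Real.exp (-t / 2) + Real.exp (t / 2))) t) := by
  set φ : ℝ → ℝ := fun t => Real.log (Real.exp (-t / 2) + Real.exp (t / 2)) with hφ
  have hd1 : deriv φ = h := funext fun t => (hasDerivAt_phi t).deriv
  have hd2 : deriv (deriv φ) = fun t => 1 / 4 - h t ^ 2 := by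
    rw [hd1]; exact funext fun t => (hasDerivAt_h t).deriv
  have hd3 : deriv (deriv (deriv φ)) = fun t => -(2 * h t) * (1 / 4 - h t ^ 2) := by
    rw [hd2]; exact funext fun t => (hasDerivAt_phi'' t).deriv
  have hi2 : iteratedDeriv 2 φ = fun t => 1 / 4 - h t ^ 2 := by
    have e : iteratedDeriv 2 φ = deriv (deriv φ) := by
      show iteratedDeriv (1 + 1) φ = _
      rw [iteratedDeriv_succ, iteratedDeriv_one]
    rw [e, hd2]
  have hi3 : iteratedDeriv 3 φ = fun t => -(2 * h t) * (1 / 4 - h t ^ 2) := by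
    have e : iteratedDeriv 3 φ = deriv (deriv (deriv φ)) := by
      show iteratedDeriv (1 + 1 + 1) φ = _
      rw [iteratedDeriv_succ, iteratedDeriv_succ, iteratedDeriv_one]
    rw [e, hd3]
  have hpos : ∀ t, 0 < 1 / 4 - h t ^ 2 := by
    intro t
    have := habs t
    nlinarith [abs_nonneg (h t), sq_abs (h t)]
  refine ⟨?_, ?_, ?_⟩
  · have hg : ContDiff ℝ (⊤ : ℕ∞) (fun t : ℝ => Real.exp (-t / 2) + Real.exp (t / 2)) := by
      apply ContDiff.add
      · exact Real.contDiff_exp.comp (contDiff_id.neg.div_const 2)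
      · exact Real.contDiff_exp.comp (contDiff_id.div_const 2)
    exact hg.log fun t => (gpos t).ne'
  · intro t; rw [hi2]; exact hpos t
  · intro t
    rw [hi2, hi3]
    have h1 := (habs t).le
    have h2 := (hpos t).le
    rw [abs_mul, abs_of_nonneg h2, abs_neg, abs_mul, abs_two]
    calc 2 * |h t| * (1 / 4 - h t ^ 2) ≤ 1 * (1 / 4 - h t ^ 2) := by nlinarith
    _ = _ := one_mul _
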